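/- For α ∈ (0,1)∪(1,∞), the Augustin–Csiszár mutual information I_α^C(X;Y) = min_{q_Y} Σ_x p_X(x) D_α(p_{Y|X}(·|x) ‖ q_Y) admits the variational representation I_α^C(X;Y) = H(p_X) + max over reverse channels r_{X|Y} of (α/(α−1)) Σ_x p_X(x) log Σ_y p_{Y|X}(y|x) r_{X|Y}(x|y)^{1−1/α}. -/

import Mathlib

open BigOperators

/-- `p` is a probability distribution on the finite set `X`. -/
def IsDist {X : Type*} [Fintype X] (p : X → ℝ) : Prop :=
  (∀ x, 0 ≤ p x) ∧ ∑ x, p x = 1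

/-- `W` is a channel from `X` to `Y`. -/
def IsChannel {X Y : Type*} [Fintype Y] (W : X → Y → ℝ) : Prop :=
  ∀ x, (∀ y, 0 ≤ W x y) ∧ ∑ y, W x y = 1

section AuxAugustin
open Real Filter Set Topology


lemma myContinuousAt_sum {β ι : Type*} [TopologicalSpace β] (s : Finset ι) (f : ι → β → ℝ) {x : β}
    (h : ∀ i ∈ s, ContinuousAt (f i) x) : ContinuousAt (fun b => ∑ i ∈ s, f i b) x := by
  induction s using Finset.cons_induction with
  | empty => simpa using continuousAt_const
  | cons i s hi ih =>
    simp only [Finset.sum_cons]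
    exact (h i (Finset.mem_cons_self _ _)).add (ih fun j hj => h j (Finset.mem_cons.mpr (Or.inr hj)))

lemma myGibbs {X : Type*} [Fintype X] (p m : X → ℝ) (hp : ∀ x, 0 < p x) (hm : ∀ x, 0 < m x)
    (hps : ∑ x, p x = 1) (hms : ∑ x, m x ≤ 1) :
    ∑ x, p x * Real.log (m x) ≤ ∑ x, p x * Real.log (p x) := by
  have h : ∀ x : X, p x * Real.log (m x) - p x * Real.log (p x) ≤ m x - p x := by
    intro x
    have h1 : Real.log (m x / p x) ≤ m x / p x - 1 :=
      Real.log_le_sub_one_of_pos (div_pos (hm x) (hp x))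
    have h2 : p x * Real.log (m x / p x) ≤ p x * (m x / p x - 1) :=
      mul_le_mul_of_nonneg_left h1 (hp x).le
    rw [Real.log_div (hm x).ne' (hp x).ne'] at h2
    have h3 : p x * (m x / p x - 1) = m x - p x := by field_simp [(hp x).ne']
    nlinarith [h2]
  have h4 := Finset.sum_le_sum (fun x (_ : x ∈ Finset.univ) => h x)
  rw [Finset.sum_sub_distrib] at h4
  have h5 : ∑ x, (m x - p x) = (∑ x, m x) - 1 := by rw [Finset.sum_sub_distrib, hps]
  rw [h5] at h4
  linarith


lemma myKey {ι : Type*} [Fintype ι] [Nonempty ι] {α : ℝ} (hα0 : 0 < α) (hα1 : α ≠ 1)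
    (a b : ι → ℝ) (ha : ∀ i, 0 < a i) (hb : ∀ i, 0 < b i) :
    (α / (α - 1)) * Real.log (∑ i, a i) ≤
      (1 / (α - 1)) * Real.log (∑ i, a i ^ α * b i ^ (1 - α)) + Real.log (∑ i, b i) := by
  have hα1' : α - 1 ≠ 0 := sub_ne_zero_of_ne hα1
  set M := ∑ i, b i with hM
  set B := ∑ i, a i with hB
  set A := ∑ i, a i ^ α * b i ^ (1 - α) with hA
  have hMpos : 0 < M := Finset.sum_pos (fun i _ => hb i) Finset.univ_nonempty
  have hBpos : 0 < B := Finset.sum_pos (fun i _ => ha i) Finset.univ_nonempty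
  have hApos : 0 < A := Finset.sum_pos (fun i _ => mul_pos (Real.rpow_pos_of_pos (ha i) _)
      (Real.rpow_pos_of_pos (hb i) _)) Finset.univ_nonempty
  set w : ι → ℝ := fun i => b i / M with hw
  set t : ι → ℝ := fun i => a i / b i with ht
  have hwpos : ∀ i, 0 < w i := fun i => div_pos (hb i) hMpos
  have htpos : ∀ i, 0 < t i := fun i => div_pos (ha i) (hb i)
  have hwsum : ∑ i, w i = 1 := by
    rw [hw]; rw [← Finset.sum_div]; exact div_self hMpos.ne'
  have hwt : ∑ i, w i * t i = B / M := by
    rw [hB, Finset.sum_div]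
    refine Finset.sum_congr rfl fun i _ => ?_
    rw [hw, ht]
    field_simp [(hb i).ne']
  have hwta : ∑ i, w i * t i ^ α = A / M := by
    rw [hA, Finset.sum_div]
    refine Finset.sum_congr rfl fun i _ => ?_
    rw [hw, ht, Real.div_rpow (ha i).le (hb i).le,
      Real.rpow_sub (hb i), Real.rpow_one]
    field_simp [(Real.rpow_pos_of_pos (hb i) α).ne']
  have hBM : Real.log (B / M) = Real.log B - Real.log M :=
    Real.log_div hBpos.ne' hMpos.ne'
  have hAM : Real.log (A / M) = Real.log A - Real.log M :=
    Real.log_div hApos.ne' hMpos.ne'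
  rcases lt_or_gt_of_ne hα1 with hlt | hgt
  · -- α < 1 : A/M ≤ (B/M)^α
    have hp1 : (1:ℝ) ≤ 1 / α := by
      rw [le_div_iff₀ hα0]; linarith
    have key := Real.arith_mean_le_rpow_mean Finset.univ w (fun i => t i ^ α)
      (fun i _ => (hwpos i).le) hwsum (fun i _ => (Real.rpow_pos_of_pos (htpos i) _).le) hp1
    have e1 : ∀ i, (t i ^ α) ^ (1/α) = t i := by
      intro i
      rw [← Real.rpow_mul (htpos i).le, mul_one_div_cancel hα0.ne', Real.rpow_one]
    have e2 : (1:ℝ) / (1/α) = α := one_div_one_div α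
    rw [e2] at key
    simp only [e1] at key
    rw [hwt, hwta] at key
    -- key : A / M ≤ (B / M) ^ α
    have hlog : Real.log (A / M) ≤ α * Real.log (B / M) := by
      have := Real.log_le_log (div_pos hApos hMpos) key
      rwa [Real.log_rpow (div_pos hBpos hMpos)] at this
    rw [hAM, hBM] at hlog
    have key2 : Real.log A ≤ α * Real.log B + (1 - α) * Real.log M := by linarith
    have hneg : (α - 1)⁻¹ < 0 := inv_lt_zero.mpr (by linarith)
    have step := mul_le_mul_of_nonpos_right key2 hneg.le
    have expand : (α / (α - 1)) * Real.log B
        = (α * Real.log B + (1 - α) * Real.log M) * (α - 1)⁻¹ + Real.log M := by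
      field_simp
      ring
    rw [expand]
    calc (α * Real.log B + (1 - α) * Real.log M) * (α - 1)⁻¹ + Real.log M
        ≤ Real.log A * (α - 1)⁻¹ + Real.log M := by linarith
      _ = (1 / (α - 1)) * Real.log A + Real.log M := by ring
  · -- α > 1 : (B/M)^α ≤ A/M
    have key := Real.rpow_arith_mean_le_arith_mean_rpow Finset.univ w t
      (fun i _ => (hwpos i).le) hwsum (fun i _ => (htpos i).le) hgt.le
    rw [hwt, hwta] at key
    have hlog : α * Real.log (B / M) ≤ Real.log (A / M) := by
      have := Real.log_le_log (Real.rpow_pos_of_pos (div_pos hBpos hMpos) α) key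
      rwa [Real.log_rpow (div_pos hBpos hMpos)] at this
    rw [hAM, hBM] at hlog
    have key2 : α * Real.log B ≤ Real.log A + (α - 1) * Real.log M := by linarith
    have hpos : (0:ℝ) < (α - 1)⁻¹ := inv_pos.mpr (by linarith)
    have step := mul_le_mul_of_nonneg_right key2 hpos.le
    calc (α / (α - 1)) * Real.log B = (α * Real.log B) * (α - 1)⁻¹ := by ring
      _ ≤ (Real.log A + (α - 1) * Real.log M) * (α - 1)⁻¹ := step
      _ = (1 / (α - 1)) * Real.log A + Real.log M := by
          field_simp


lemma myDerivSign {φ : ℝ → ℝ} {c δ : ℝ} (hδ : 0 < δ) (hd : HasDerivAt φ c 0)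
    (h : ∀ t, 0 ≤ t → t < δ → φ 0 ≤ φ t) : 0 ≤ c := by
  have hs : Tendsto (slope φ 0) (𝓝[≠] 0) (𝓝 c) := hasDerivAt_iff_tendsto_slope.mp hd
  have h2 : Tendsto (slope φ 0) (𝓝[>] 0) (𝓝 c) :=
    hs.mono_left (nhdsWithin_mono 0 (fun t ht => ne_of_gt ht))
  refine ge_of_tendsto h2 ?_
  filter_upwards [Ioo_mem_nhdsGT_of_mem (⟨le_refl (0:ℝ), hδ⟩ : (0:ℝ) ∈ Ico 0 δ)] with t ht
  rw [slope_def_field]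
  exact div_nonneg (sub_nonneg.mpr (h t ht.1.le ht.2)) (by simpa using ht.1.le)

lemma myHasDeriv {X Y : Type*} [Fintype X] [Fintype Y] [Nonempty Y] {α : ℝ} (hα1' : α - 1 ≠ 0)
    (p : X → ℝ) (W : X → Y → ℝ) (hWs : ∀ x y, 0 < W x y)
    (q d : Y → ℝ) (hq : ∀ y, 0 < q y) :
    HasDerivAt (fun τ => ∑ x, p x * ((1 / (α - 1)) *
        Real.log (∑ y, W x y ^ α * (q y + τ * d y) ^ (1 - α))))
      (-∑ x, p x * ((∑ y, W x y ^ α * (q y) ^ (-α) * d y) /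
        (∑ y, W x y ^ α * (q y) ^ (1 - α)))) 0 := by
  have hx : ∀ x, HasDerivAt (fun τ => ∑ y, W x y ^ α * (q y + τ * d y) ^ (1 - α))
      (∑ y, W x y ^ α * (d y * (1 - α) * (q y) ^ (-α))) 0 := by
    intro x
    apply HasDerivAt.fun_sum
    intro y _
    have hbase : HasDerivAt (fun τ : ℝ => q y + τ * d y) (d y) 0 := by
      simpa using ((hasDerivAt_id (0:ℝ)).mul_const (d y)).const_add (q y)
    have h0 : q y + 0 * d y ≠ 0 := by simpa using (hq y).ne'
    have h1 := (hbase.rpow_const (p := 1 - α) (Or.inl h0)).const_mul (W x y ^ α)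
    simp only [zero_mul, add_zero] at h1
    rw [show (1:ℝ) - α - 1 = -α by ring] at h1
    exact h1
  have main := HasDerivAt.fun_sum (u := Finset.univ) (x := (0:ℝ))
    (A := fun x τ => p x * ((1 / (α - 1)) *
        Real.log (∑ y, W x y ^ α * (q y + τ * d y) ^ (1 - α))))
    (A' := fun x => p x * ((1 / (α - 1)) *
      ((∑ y, W x y ^ α * (d y * (1 - α) * (q y) ^ (-α))) /
        (∑ y, W x y ^ α * (q y) ^ (1 - α)))))
    (fun x _ => by
      have hA0 : (∑ y, W x y ^ α * (q y + 0 * d y) ^ (1 - α)) ≠ 0 := by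
        have hpos : 0 < ∑ y, W x y ^ α * (q y + 0 * d y) ^ (1 - α) := by
          refine Finset.sum_pos (fun y _ => mul_pos (Real.rpow_pos_of_pos (hWs x y) _)
            (Real.rpow_pos_of_pos (by simpa using hq y) _)) Finset.univ_nonempty
        exact hpos.ne'
      have h2 := (((hx x).log hA0).const_mul (1 / (α - 1))).const_mul (p x)
      simp only [zero_mul, add_zero] at h2
      exact h2)
  refine main.congr_deriv (Eq.symm ?_)
  rw [← Finset.sum_neg_distrib]
  refine Finset.sum_congr rfl fun x _ => ?_
  have hsum : ∑ y, W x y ^ α * (d y * (1 - α) * (q y) ^ (-α))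
      = (1 - α) * ∑ y, W x y ^ α * (q y) ^ (-α) * d y := by
    rw [Finset.mul_sum]
    exact Finset.sum_congr rfl fun y _ => by ring
  have hA : (∑ y, W x y ^ α * (q y) ^ (1 - α)) ≠ 0 :=
    (Finset.sum_pos (fun y _ => mul_pos (Real.rpow_pos_of_pos (hWs x y) _)
      (Real.rpow_pos_of_pos (hq y) _)) Finset.univ_nonempty).ne'
  rw [hsum]
  field_simp
  ring

section
set_option linter.unusedSectionVars false
variable {X Y : Type*} [Fintype X] [Fintype Y] [Nonempty X] [Nonempty Y]

lemma myFcont (α : ℝ) (p : X → ℝ) (W : X → Y → ℝ) (hWs : ∀ x y, 0 < W x y)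
    (q : Y → ℝ) (hq : ∀ y, 0 < q y) :
    ContinuousAt (fun q : Y → ℝ => ∑ x, p x * ((1 / (α - 1)) *
      Real.log (∑ y, W x y ^ α * (q y) ^ (1 - α)))) q := by
  apply myContinuousAt_sum
  intro x _
  apply ContinuousAt.mul continuousAt_const
  apply ContinuousAt.mul continuousAt_const
  have hsum : ContinuousAt (fun q : Y → ℝ => ∑ y, W x y ^ α * (q y) ^ (1 - α)) q := by
    apply myContinuousAt_sum
    intro y _
    exact ContinuousAt.mul continuousAt_const
      (((continuous_apply y).continuousAt).rpow_const (Or.inl (hq y).ne'))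
  have hne : (∑ y, W x y ^ α * (q y) ^ (1 - α)) ≠ 0 :=
    (Finset.sum_pos (fun y _ => mul_pos (Real.rpow_pos_of_pos (hWs x y) _)
      (Real.rpow_pos_of_pos (hq y) _)) Finset.univ_nonempty).ne'
  exact hsum.log hne

end

section
set_option linter.unusedSectionVars false
variable {X Y : Type*} [Fintype X] [Fintype Y] [Nonempty X] [Nonempty Y]

lemma myCompactMin {ε : ℝ} (hε : 0 < ε) (hε1 : ε ≤ 1 / (Fintype.card Y : ℝ))
    (F : (Y → ℝ) → ℝ)
    (hF : ∀ q : Y → ℝ, (∀ y, 0 < q y) → ContinuousAt F q) :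
    ∃ q : Y → ℝ, ((∀ y, ε ≤ q y) ∧ ∑ y, q y = 1) ∧
      ∀ v : Y → ℝ, ((∀ y, ε ≤ v y) ∧ ∑ y, v y = 1) → F q ≤ F v := by
  set S : Set (Y → ℝ) := {q | (∀ y, ε ≤ q y) ∧ ∑ y, q y = 1} with hS
  have hn : (0:ℝ) < (Fintype.card Y : ℝ) := by
    have := Fintype.card_pos (α := Y); exact_mod_cast this
  have hne : S.Nonempty := by
    refine ⟨fun _ => 1 / (Fintype.card Y : ℝ), fun y => hε1, ?_⟩
    rw [Finset.sum_const, Finset.card_univ, nsmul_eq_mul]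
    field_simp
  have hclosed : IsClosed S := by
    have : S = (⋂ y, {q : Y → ℝ | ε ≤ q y}) ∩ {q : Y → ℝ | ∑ y, q y = 1} := by
      ext q; simp [hS, Set.mem_iInter]
    rw [this]
    exact (isClosed_iInter fun y => isClosed_le continuous_const (continuous_apply y)).inter
      (isClosed_eq (continuous_finset_sum _ fun y _ => continuous_apply y) continuous_const)
  have hbdd : Bornology.IsBounded S := by
    refine (Metric.isBounded_closedBall (x := (0 : Y → ℝ)) (r := 1)).subset ?_
    intro q hq
    rw [Metric.mem_closedBall, dist_zero_right]
    refine (pi_norm_le_iff_of_nonneg zero_le_one).mpr fun y => ?_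
    rw [Real.norm_eq_abs, abs_of_nonneg (hε.le.trans (hq.1 y))]
    calc q y ≤ ∑ y', q y' := Finset.single_le_sum (fun y' _ => hε.le.trans (hq.1 y')) (Finset.mem_univ y)
      _ = 1 := hq.2
  have hcompact : IsCompact S := Metric.isCompact_iff_isClosed_bounded.mpr ⟨hclosed, hbdd⟩
  obtain ⟨q, hqS, hqmin⟩ := hcompact.exists_isMinOn hne
    (fun q hq => (hF q fun y => hε.trans_le (hq.1 y)).continuousWithinAt)
  exact ⟨q, hqS, fun v hv => hqmin hv⟩

lemma myStationary {α : ℝ} (hα0 : 0 < α) (hα1 : α ≠ 1)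
    (p : X → ℝ) (W : X → Y → ℝ) (hps : ∀ x, 0 < p x) (hpsum : ∑ x, p x = 1)
    (hWs : ∀ x y, 0 < W x y) :
    ∃ q : Y → ℝ, (∀ y, 0 < q y) ∧ (∑ y, q y = 1) ∧
      ∀ y, (∑ x, p x * (W x y ^ α * (q y) ^ (-α) /
        (∑ y', W x y' ^ α * (q y') ^ (1 - α)))) = 1 := by
  classical
  have hα1' : α - 1 ≠ 0 := sub_ne_zero_of_ne hα1
  set n : ℝ := (Fintype.card Y : ℝ) with hn
  have hnpos : (0:ℝ) < n := by
    have := Fintype.card_pos (α := Y); rw [hn]; exact_mod_cast this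
  obtain ⟨zmin, -, hzmin⟩ := Finset.exists_min_image (Finset.univ : Finset (X × Y))
    (fun z => W z.1 z.2) Finset.univ_nonempty
  obtain ⟨zmax, -, hzmax⟩ := Finset.exists_max_image (Finset.univ : Finset (X × Y))
    (fun z => W z.1 z.2) Finset.univ_nonempty
  set wmin := W zmin.1 zmin.2 with hwmin
  set wmax := W zmax.1 zmax.2 with hwmax
  have hwminpos : 0 < wmin := hWs _ _
  have hwmaxpos : 0 < wmax := hWs _ _
  have hminle : ∀ x y, wmin ≤ W x y := fun x y => hzmin (x, y) (Finset.mem_univ _)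
  have hmaxle : ∀ x y, W x y ≤ wmax := fun x y => hzmax (x, y) (Finset.mem_univ _)
  set ε : ℝ := min (wmin / (wmax * n * 2)) (1 / (2 * n)) with hε
  have hεpos : 0 < ε := lt_min (by positivity) (by positivity)
  have hεn : ε < 1 / n := lt_of_le_of_lt (min_le_right _ _) (by
    rw [div_lt_div_iff₀ (by positivity) hnpos]; linarith)
  have hεkey : wmax * n < wmin / ε := by
    have h1 : ε ≤ wmin / (wmax * n * 2) := min_le_left _ _
    have h2 : ε * (wmax * n * 2) ≤ wmin := by
      rw [← le_div_iff₀ (by positivity)]; exact h1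
    rw [lt_div_iff₀ hεpos]
    nlinarith [hεpos, hwmaxpos, hnpos]
  set F : (Y → ℝ) → ℝ := fun q => ∑ x, p x * ((1 / (α - 1)) *
      Real.log (∑ y, W x y ^ α * (q y) ^ (1 - α))) with hF
  obtain ⟨q, ⟨hqε, hqsum⟩, hqmin⟩ := myCompactMin hεpos hεn.le F
    (fun q hq => myFcont α p W hWs q hq)
  have hqpos : ∀ y, 0 < q y := fun y => hεpos.trans_le (hqε y)
  set A : X → ℝ := fun x => ∑ y', W x y' ^ α * (q y') ^ (1 - α) with hA
  have hApos : ∀ x, 0 < A x := fun x =>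
    Finset.sum_pos (fun y _ => mul_pos (Real.rpow_pos_of_pos (hWs x y) _)
      (Real.rpow_pos_of_pos (hqpos y) _)) Finset.univ_nonempty
  have hcomp : ∀ x₁ x₂ y₁ y₂, q y₁ ≤ ε → 1 / n ≤ q y₂ →
      W x₂ y₂ ^ α * (q y₂) ^ (-α) < W x₁ y₁ ^ α * (q y₁) ^ (-α) := by
    intro x₁ x₂ y₁ y₂ hy₁ hy₂
    have hq₁ : 0 < q y₁ := hqpos y₁
    have hq₂ : 0 < q y₂ := hqpos y₂
    have e : ∀ (x : X) (y : Y), W x y ^ α * (q y) ^ (-α) = (W x y / q y) ^ α := by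
      intro x y
      rw [Real.div_rpow (hWs x y).le (hqpos y).le, Real.rpow_neg (hqpos y).le, div_eq_mul_inv]
    rw [e, e]
    have h1 : W x₂ y₂ / q y₂ ≤ wmax * n := by
      rw [div_le_iff₀ hq₂]
      calc W x₂ y₂ ≤ wmax := hmaxle _ _
        _ = wmax * n * (1/n) := by field_simp
        _ ≤ wmax * n * q y₂ := by
            apply mul_le_mul_of_nonneg_left hy₂ (by positivity)
    have h2 : wmin / ε ≤ W x₁ y₁ / q y₁ := by
      apply div_le_div₀ (hWs x₁ y₁).le (hminle _ _) (hqpos y₁) hy₁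
    calc (W x₂ y₂ / q y₂) ^ α ≤ (wmax * n) ^ α :=
          Real.rpow_le_rpow (div_pos (hWs _ _) hq₂).le h1 hα0.le
      _ < (wmin / ε) ^ α :=
          Real.rpow_lt_rpow (mul_pos hwmaxpos hnpos).le hεkey hα0
      _ ≤ (W x₁ y₁ / q y₁) ^ α :=
          Real.rpow_le_rpow (div_pos hwminpos hεpos).le h2 hα0.le
  have hint : ∀ y, ε < q y := by
    by_contra hcon
    push_neg at hcon
    obtain ⟨y₁, hy₁⟩ := hcon
    obtain ⟨y₂, -, hy₂⟩ := Finset.exists_le_of_sum_le (Finset.univ_nonempty)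
      (f := fun _ : Y => 1 / n) (g := q) (by
        rw [Finset.sum_const, Finset.card_univ, nsmul_eq_mul, hqsum, ← hn]
        field_simp; exact le_rfl)
    have hy12 : y₁ ≠ y₂ := by
      intro h; rw [h] at hy₁
      exact absurd hεn (not_lt.mpr (hy₂.trans hy₁))
    set d : Y → ℝ := fun y => (if y = y₁ then (1:ℝ) else 0) - (if y = y₂ then 1 else 0) with hd
    set δ : ℝ := q y₂ - ε with hδ
    have hεy₂ : ε < q y₂ := hεn.trans_le hy₂
    have hδpos : 0 < δ := by rw [hδ]; linarith
    have hdsum : ∑ y, d y = 0 := by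
      simp [hd, Finset.sum_sub_distrib, Finset.sum_ite_eq']
    have hmem : ∀ τ : ℝ, 0 ≤ τ → τ < δ →
        ((∀ y, ε ≤ q y + τ * d y) ∧ ∑ y, (q y + τ * d y) = 1) := by
      intro τ hτ0 hτδ
      constructor
      · intro y
        by_cases h1 : y = y₁
        · have hdy : d y = 1 := by
            simp only [hd]; rw [if_pos h1, if_neg (by rw [h1]; exact hy12)]; ring
          rw [hdy, h1]; linarith [hqε y₁]
        · by_cases h2 : y = y₂
          · have hdy : d y = -1 := by
              simp only [hd]; rw [if_neg h1, if_pos h2]; ring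
            rw [hdy, h2]; rw [hδ] at hτδ; linarith
          · have hdy : d y = 0 := by
              simp only [hd]; rw [if_neg h1, if_neg h2]; ring
            rw [hdy]; simpa using hqε y
      · rw [Finset.sum_add_distrib, hqsum, ← Finset.mul_sum, hdsum, mul_zero, add_zero]
    have hderiv := myHasDeriv (X := X) hα1' p W hWs q d hqpos
    have hsign : 0 ≤ -∑ x, p x * ((∑ y, W x y ^ α * (q y) ^ (-α) * d y) /
        (∑ y', W x y' ^ α * (q y') ^ (1 - α))) := by
      refine myDerivSign hδpos hderiv ?_
      intro τ hτ0 hτδ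
      have := hqmin (fun y => q y + τ * d y) (hmem τ hτ0 hτδ)
      simpa [hF] using this
    have hdval : ∀ x, (∑ y, W x y ^ α * (q y) ^ (-α) * d y)
        = W x y₁ ^ α * (q y₁) ^ (-α) - W x y₂ ^ α * (q y₂) ^ (-α) := by
      intro x
      simp [hd, mul_sub, Finset.sum_sub_distrib, mul_ite, mul_one, mul_zero,
        Finset.sum_ite_eq']
    have hneg : (0:ℝ) < ∑ x, p x * ((∑ y, W x y ^ α * (q y) ^ (-α) * d y) /
        (∑ y', W x y' ^ α * (q y') ^ (1 - α))) := by
      apply Finset.sum_pos _ Finset.univ_nonempty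
      intro x _
      apply mul_pos (hps x)
      apply div_pos _ (hApos x)
      rw [hdval x]
      have := hcomp x x y₁ y₂ hy₁ hy₂
      linarith
    linarith
  set Sv : Y → ℝ := fun y => ∑ x, p x * (W x y ^ α * (q y) ^ (-α) / A x) with hSv
  have hpair : ∀ y₁ y₂, Sv y₁ = Sv y₂ := by
    intro y₁ y₂
    rcases eq_or_ne y₁ y₂ with h | hy12
    · rw [h]
    set d : Y → ℝ := fun y => (if y = y₁ then (1:ℝ) else 0) - (if y = y₂ then 1 else 0) with hd
    set δ : ℝ := min (q y₁ - ε) (q y₂ - ε) with hδ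
    have hδpos : 0 < δ := lt_min (by linarith [hint y₁]) (by linarith [hint y₂])
    have hdsum : ∑ y, d y = 0 := by
      simp [hd, Finset.sum_sub_distrib, Finset.sum_ite_eq']
    have hmem : ∀ τ : ℝ, |τ| < δ →
        ((∀ y, ε ≤ q y + τ * d y) ∧ ∑ y, (q y + τ * d y) = 1) := by
      intro τ hτ
      have hτ1 : -δ < τ := neg_lt_of_abs_lt hτ
      have hτ2 : τ < δ := lt_of_abs_lt hτ
      have hδ1 : δ ≤ q y₁ - ε := min_le_left _ _
      have hδ2 : δ ≤ q y₂ - ε := min_le_right _ _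
      constructor
      · intro y
        by_cases h1 : y = y₁
        · have hdy : d y = 1 := by
            simp only [hd]; rw [if_pos h1, if_neg (by rw [h1]; exact hy12)]; ring
          rw [hdy, h1]; linarith
        · by_cases h2 : y = y₂
          · have hdy : d y = -1 := by
              simp only [hd]; rw [if_neg h1, if_pos h2]; ring
            rw [hdy, h2]; linarith
          · have hdy : d y = 0 := by
              simp only [hd]; rw [if_neg h1, if_neg h2]; ring
            rw [hdy]; simpa using hqε y
      · rw [Finset.sum_add_distrib, hqsum, ← Finset.mul_sum, hdsum, mul_zero, add_zero]
    have hderiv := myHasDeriv (X := X) hα1' p W hWs q d hqpos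
    have hloc : IsLocalMin (fun τ => ∑ x, p x * ((1 / (α - 1)) *
        Real.log (∑ y, W x y ^ α * (q y + τ * d y) ^ (1 - α)))) 0 := by
      have hball : Set.Ioo (-δ) δ ∈ 𝓝 (0:ℝ) := Ioo_mem_nhds (neg_lt_zero.mpr hδpos) hδpos
      refine Filter.eventually_of_mem hball ?_
      intro τ hτ
      have habs : |τ| < δ := abs_lt.mpr ⟨hτ.1, hτ.2⟩
      have := hqmin (fun y => q y + τ * d y) (hmem τ habs)
      simpa [hF] using this
    have hzero := hloc.hasDerivAt_eq_zero hderiv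
    have hdval : ∀ x, (∑ y, W x y ^ α * (q y) ^ (-α) * d y)
        = W x y₁ ^ α * (q y₁) ^ (-α) - W x y₂ ^ α * (q y₂) ^ (-α) := by
      intro x
      simp [hd, mul_sub, Finset.sum_sub_distrib, mul_ite, mul_one, mul_zero,
        Finset.sum_ite_eq']
    have hsplit : (∑ x, p x * ((∑ y, W x y ^ α * (q y) ^ (-α) * d y) /
        (∑ y', W x y' ^ α * (q y') ^ (1 - α))))
        = Sv y₁ - Sv y₂ := by
      rw [hSv]
      simp only
      rw [← Finset.sum_sub_distrib]
      refine Finset.sum_congr rfl fun x _ => ?_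
      rw [hdval x, sub_div, mul_sub]
    rw [hsplit] at hzero
    have h0 : Sv y₁ - Sv y₂ = 0 := neg_eq_zero.mp hzero
    linarith
  have hq1a : ∀ y, q y * (q y) ^ (-α) = (q y) ^ (1 - α) := by
    intro y
    calc q y * (q y) ^ (-α) = (q y) ^ (1:ℝ) * (q y) ^ (-α) := by rw [Real.rpow_one]
      _ = (q y) ^ (1 + -α) := (Real.rpow_add (hqpos y) 1 (-α)).symm
      _ = (q y) ^ (1 - α) := by rw [sub_eq_add_neg]
  have hsum1 : ∑ y, q y * Sv y = 1 := by
    have e1 : ∀ y, q y * Sv y = ∑ x, p x * (W x y ^ α * (q y) ^ (1 - α) / A x) := by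
      intro y
      rw [hSv]
      simp only
      rw [Finset.mul_sum]
      refine Finset.sum_congr rfl fun x _ => ?_
      rw [show q y * (p x * (W x y ^ α * q y ^ (-α) / A x))
        = p x * (W x y ^ α * (q y * q y ^ (-α)) / A x) by ring, hq1a y]
    simp only [e1]
    rw [Finset.sum_comm]
    have e2 : ∀ x, ∑ y, p x * (W x y ^ α * (q y) ^ (1 - α) / A x) = p x := by
      intro x
      rw [← Finset.mul_sum, ← Finset.sum_div]
      rw [show (∑ y, W x y ^ α * q y ^ (1 - α)) = A x from rfl]
      rw [div_self (hApos x).ne', mul_one]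
    simp only [e2]
    exact hpsum
  have hval : ∀ y, Sv y = 1 := by
    intro y
    have hconst : ∀ y', q y' * Sv y' = q y' * Sv y := fun y' => by rw [hpair y' y]
    rw [Finset.sum_congr rfl (fun y' _ => hconst y')] at hsum1
    rw [← Finset.sum_mul, hqsum, one_mul] at hsum1
    exact hsum1
  exact ⟨q, hqpos, hqsum, fun y => hval y⟩

end

section
set_option linter.unusedSectionVars false
variable {X Y : Type*} [Fintype X] [Fintype Y] [Nonempty X] [Nonempty Y]

lemma myDuality {α : ℝ} (hα0 : 0 < α) (hα1 : α ≠ 1)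
    (p : X → ℝ) (W : X → Y → ℝ) (hps : ∀ x, 0 < p x) (hpsum : ∑ x, p x = 1)
    (hWs : ∀ x y, 0 < W x y)
    (q : Y → ℝ) (hq : ∀ y, 0 < q y) (hqsum : ∑ y, q y = 1)
    (r : Y → X → ℝ) (hr : ∀ y x, 0 < r y x) (hrsum : ∀ y, ∑ x, r y x = 1) :
    (α / (α - 1)) * ∑ x, p x * Real.log (∑ y, W x y * r y x ^ (1 - 1 / α))
      ≤ (∑ x, p x * ((1 / (α - 1)) * Real.log (∑ y, W x y ^ α * q y ^ (1 - α))))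
        + ∑ x, p x * Real.log (p x) := by
  have hα' : α ≠ 0 := hα0.ne'
  have hkey : ∀ x, (α / (α - 1)) * Real.log (∑ y, W x y * r y x ^ (1 - 1 / α))
      ≤ (1 / (α - 1)) * Real.log (∑ y, W x y ^ α * q y ^ (1 - α))
        + Real.log (∑ y, q y * r y x) := by
    intro x
    have h := myKey hα0 hα1 (fun y => W x y * r y x ^ (1 - 1 / α)) (fun y => q y * r y x)
      (fun y => mul_pos (hWs x y) (Real.rpow_pos_of_pos (hr y x) _))
      (fun y => mul_pos (hq y) (hr y x))
    have e : (∑ y, (W x y * r y x ^ (1 - 1 / α)) ^ α * (q y * r y x) ^ (1 - α))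
        = ∑ y, W x y ^ α * q y ^ (1 - α) := by
      refine Finset.sum_congr rfl fun y _ => ?_
      rw [Real.mul_rpow (hWs x y).le (Real.rpow_pos_of_pos (hr y x) _).le,
        Real.mul_rpow (hq y).le (hr y x).le, ← Real.rpow_mul (hr y x).le]
      calc W x y ^ α * r y x ^ ((1 - 1 / α) * α) * (q y ^ (1 - α) * r y x ^ (1 - α))
          = W x y ^ α * q y ^ (1 - α) * (r y x ^ ((1 - 1 / α) * α) * r y x ^ (1 - α)) := by
            ring
        _ = W x y ^ α * q y ^ (1 - α) * r y x ^ ((1 - 1 / α) * α + (1 - α)) := by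
            rw [← Real.rpow_add (hr y x)]
        _ = W x y ^ α * q y ^ (1 - α) := by
            rw [show (1 - 1 / α) * α + (1 - α) = 0 by field_simp; ring, Real.rpow_zero, mul_one]
    rw [e] at h
    exact h
  have hmpos : ∀ x, 0 < ∑ y, q y * r y x := fun x =>
    Finset.sum_pos (fun y _ => mul_pos (hq y) (hr y x)) Finset.univ_nonempty
  have hmsum : ∑ x, ∑ y, q y * r y x = 1 := by
    rw [Finset.sum_comm]
    calc ∑ y, ∑ x, q y * r y x = ∑ y, q y * ∑ x, r y x := by
          refine Finset.sum_congr rfl fun y _ => ?_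
          rw [Finset.mul_sum]
      _ = ∑ y, q y := by
          refine Finset.sum_congr rfl fun y _ => ?_
          rw [hrsum y, mul_one]
      _ = 1 := hqsum
  have hGibbs := myGibbs p (fun x => ∑ y, q y * r y x) hps hmpos hpsum (le_of_eq hmsum)
  have h1 : ∑ x, p x * ((α / (α - 1)) * Real.log (∑ y, W x y * r y x ^ (1 - 1 / α)))
      ≤ ∑ x, (p x * ((1 / (α - 1)) * Real.log (∑ y, W x y ^ α * q y ^ (1 - α)))
          + p x * Real.log (∑ y, q y * r y x)) := by
    refine Finset.sum_le_sum fun x _ => ?_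
    have := mul_le_mul_of_nonneg_left (hkey x) (hps x).le
    rw [mul_add] at this
    exact this
  rw [Finset.sum_add_distrib] at h1
  have h2 : (α / (α - 1)) * ∑ x, p x * Real.log (∑ y, W x y * r y x ^ (1 - 1 / α))
      = ∑ x, p x * ((α / (α - 1)) * Real.log (∑ y, W x y * r y x ^ (1 - 1 / α))) := by
    rw [Finset.mul_sum]
    exact Finset.sum_congr rfl fun x _ => by ring
  rw [h2]
  linarith

end

section
set_option linter.unusedSectionVars false
variable {X Y : Type*} [Fintype X] [Fintype Y] [Nonempty X] [Nonempty Y]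

lemma myMain {α : ℝ} (hα0 : 0 < α) (hα1 : α ≠ 1)
    (p : X → ℝ) (W : X → Y → ℝ) (hps : ∀ x, 0 < p x) (hpsum : ∑ x, p x = 1)
    (hWs : ∀ x y, 0 < W x y) :
    ∃ i m : ℝ,
      IsLeast {v : ℝ | ∃ q : Y → ℝ, IsDist q ∧ (∀ y, 0 < q y) ∧
          v = ∑ x, p x * ((1 / (α - 1)) *
                Real.log (∑ y, W x y ^ α * q y ^ (1 - α)))} i ∧
      IsGreatest {v : ℝ | ∃ r : Y → X → ℝ, (∀ y, IsDist (r y)) ∧ (∀ y x, 0 < r y x) ∧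
          v = (α / (α - 1)) * ∑ x, p x *
                Real.log (∑ y, W x y * r y x ^ (1 - 1 / α))} m ∧
      i = (-∑ x, p x * Real.log (p x)) + m := by
  have hα1' : α - 1 ≠ 0 := sub_ne_zero_of_ne hα1
  have hα' : α ≠ 0 := hα0.ne'
  obtain ⟨q, hqpos, hqsum, hstat⟩ := myStationary hα0 hα1 p W hps hpsum hWs
  set A : X → ℝ := fun x => ∑ y', W x y' ^ α * q y' ^ (1 - α) with hA
  have hApos : ∀ x, 0 < A x := fun x =>
    Finset.sum_pos (fun y _ => mul_pos (Real.rpow_pos_of_pos (hWs x y) _)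
      (Real.rpow_pos_of_pos (hqpos y) _)) Finset.univ_nonempty
  set r : Y → X → ℝ := fun y x => p x * (W x y ^ α * q y ^ (-α) / A x) with hrdef
  have hrpos : ∀ y x, 0 < r y x := fun y x =>
    mul_pos (hps x) (div_pos (mul_pos (Real.rpow_pos_of_pos (hWs x y) _)
      (Real.rpow_pos_of_pos (hqpos y) _)) (hApos x))
  have hrsum : ∀ y, ∑ x, r y x = 1 := fun y => hstat y
  have hB : ∀ x, (∑ y, W x y * r y x ^ (1 - 1 / α))
      = p x ^ (1 - 1 / α) * A x ^ (1 / α) := by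
    intro x
    have e : ∀ y, W x y * r y x ^ (1 - 1 / α)
        = (p x / A x) ^ (1 - 1 / α) * (W x y ^ α * q y ^ (1 - α)) := by
      intro y
      have hre : r y x = (p x / A x) * (W x y ^ α * q y ^ (-α)) := by
        rw [hrdef]; ring
      rw [hre, Real.mul_rpow (div_pos (hps x) (hApos x)).le
          (mul_pos (Real.rpow_pos_of_pos (hWs x y) _) (Real.rpow_pos_of_pos (hqpos y) _)).le,
        Real.mul_rpow (Real.rpow_pos_of_pos (hWs x y) _).le
          (Real.rpow_pos_of_pos (hqpos y) _).le,
        ← Real.rpow_mul (hWs x y).le, ← Real.rpow_mul (hqpos y).le]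
      rw [show α * (1 - 1 / α) = α - 1 by field_simp,
        show -α * (1 - 1 / α) = 1 - α by field_simp; ring_nf]
      calc W x y * ((p x / A x) ^ (1 - 1/α) * (W x y ^ (α - 1) * q y ^ (1 - α)))
          = (p x / A x) ^ (1 - 1/α) * (W x y * W x y ^ (α - 1) * q y ^ (1 - α)) := by ring
        _ = (p x / A x) ^ (1 - 1/α) * (W x y ^ ((1:ℝ) + (α - 1)) * q y ^ (1 - α)) := by
            rw [Real.rpow_add (hWs x y), Real.rpow_one]
        _ = (p x / A x) ^ (1 - 1/α) * (W x y ^ α * q y ^ (1 - α)) := by norm_num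
    have hAinv : A x ^ ((1:ℝ)/α) = A x / A x ^ (1 - 1/α) := by
      rw [eq_div_iff (Real.rpow_pos_of_pos (hApos x) _).ne', ← Real.rpow_add (hApos x),
        show (1:ℝ)/α + (1 - 1/α) = 1 by ring, Real.rpow_one]
    calc (∑ y, W x y * r y x ^ (1 - 1 / α))
        = ∑ y, (p x / A x) ^ (1 - 1 / α) * (W x y ^ α * q y ^ (1 - α)) :=
          Finset.sum_congr rfl fun y _ => e y
      _ = (p x / A x) ^ (1 - 1 / α) * A x := by rw [← Finset.mul_sum]
      _ = p x ^ (1 - 1 / α) * A x ^ (1 / α) := by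
          rw [Real.div_rpow (hps x).le (hApos x).le, hAinv]
          ring
  have heq : (α / (α - 1)) * ∑ x, p x * Real.log (∑ y, W x y * r y x ^ (1 - 1 / α))
      = (∑ x, p x * Real.log (p x))
        + ∑ x, p x * ((1 / (α - 1)) * Real.log (∑ y, W x y ^ α * q y ^ (1 - α))) := by
    rw [Finset.mul_sum, ← Finset.sum_add_distrib]
    refine Finset.sum_congr rfl fun x _ => ?_
    rw [hB x, Real.log_mul (Real.rpow_pos_of_pos (hps x) _).ne'
        (Real.rpow_pos_of_pos (hApos x) _).ne',
      Real.log_rpow (hps x), Real.log_rpow (hApos x)]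
    simp only [hA]
    field_simp
  refine ⟨∑ x, p x * ((1 / (α - 1)) * Real.log (∑ y, W x y ^ α * q y ^ (1 - α))),
    (α / (α - 1)) * ∑ x, p x * Real.log (∑ y, W x y * r y x ^ (1 - 1 / α)),
    ⟨⟨q, ⟨fun y => (hqpos y).le, hqsum⟩, hqpos, rfl⟩, ?_⟩,
    ⟨⟨r, fun y => ⟨fun x => (hrpos y x).le, hrsum y⟩, hrpos, rfl⟩, ?_⟩, ?_⟩
  · rintro v ⟨q', hq'dist, hq'pos, rfl⟩
    have hd := myDuality hα0 hα1 p W hps hpsum hWs q' hq'pos hq'dist.2 r hrpos hrsum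
    linarith
  · rintro v ⟨r', hr'dist, hr'pos, rfl⟩
    have hd := myDuality hα0 hα1 p W hps hpsum hWs q hqpos hqsum r' hr'pos
      (fun y => (hr'dist y).2)
    linarith
  · linarith

end


end AuxAugustin

/-- Variational representation of the Augustin–Csiszár MI:
`I_α^C(X;Y) = min_{q_Y} Σ_x p_X(x) D_α(p_{Y|X}(·|x) ‖ q_Y)`
`           = H(p_X) + max_{r_{X|Y}} (α/(α-1)) Σ_x p_X(x) log Σ_y p_{Y|X}(y|x) r_{X|Y}(x|y)^{1-1/α}`. -/
theorem augustinCsiszarMI_variational {X Y : Type*} [Fintype X] [Fintype Y]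
    (α : ℝ) (hα0 : 0 < α) (hα1 : α ≠ 1)
    (p : X → ℝ) (W : X → Y → ℝ)
    (hp : IsDist p) (hps : ∀ x, 0 < p x) (hW : IsChannel W) (hWs : ∀ x y, 0 < W x y) :
    ∃ i m : ℝ,
      IsLeast {v : ℝ | ∃ q : Y → ℝ, IsDist q ∧ (∀ y, 0 < q y) ∧
          v = ∑ x, p x * ((1 / (α - 1)) *
                Real.log (∑ y, W x y ^ α * q y ^ (1 - α)))} i ∧
      IsGreatest {v : ℝ | ∃ r : Y → X → ℝ, (∀ y, IsDist (r y)) ∧ (∀ y x, 0 < r y x) ∧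
          v = (α / (α - 1)) * ∑ x, p x *
                Real.log (∑ y, W x y * r y x ^ (1 - 1 / α))} m ∧
      i = (-∑ x, p x * Real.log (p x)) + m := by
  have hX : Nonempty X := by
    by_contra h
    rw [not_nonempty_iff] at h
    have h2 := hp.2
    rw [Finset.univ_eq_empty, Finset.sum_empty] at h2
    norm_num at h2
  have hY : Nonempty Y := by
    by_contra h
    rw [not_nonempty_iff] at h
    have h2 := (hW (Classical.arbitrary X)).2
    rw [Finset.univ_eq_empty, Finset.sum_empty] at h2
    norm_num at h2
  exact myMain hα0 hα1 p W hps hp.2 hWs
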